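/- Let P : ℕ → ℝ be a positive function satisfying P(m+n) ≤ C · P(m) · P(n) for all m, n and some constant C ≥ 1. Define δ = limsup_{r→∞} (log P(r))/r and assume δ is finite. Then the series ∑_{r=0}^∞ P(r) e^{−rδ} diverges. -/

import Mathlib

/-- If `P` is positive and submultiplicative up to a constant `C ≥ 1`, and
`δ = limsup (log P r) / r` is finite (the sequence `log P r / r` is bounded),
then the series `∑ P r · e^{−rδ}` diverges. -/
theorem divergent_at_critical_exponent
    (P : ℕ → ℝ) (C : ℝ) (hC : 1 ≤ C)
    (hP : ∀ r, 0 < P r)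
    (hsub : ∀ m n : ℕ, P (m + n) ≤ C * P m * P n)
    (hbddA : BddAbove (Set.range fun r : ℕ => Real.log (P r) / r))
    (hbddB : BddBelow (Set.range fun r : ℕ => Real.log (P r) / r))
    (δ : ℝ)
    (hδ : δ = Filter.limsup (fun r : ℕ => Real.log (P r) / r) Filter.atTop) :
    ¬ Summable (fun r : ℕ => P r * Real.exp (-(r : ℝ) * δ)) := by
  have hC0 : 0 < C := lt_of_lt_of_le one_pos hC
  have hlogC : 0 ≤ Real.log C := Real.log_nonneg hC
  set u : ℕ → ℝ := fun r => Real.log C + Real.log (P r) with hu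
  have hsubadd : Subadditive u := by
    intro m n
    have : Real.log (P (m + n)) ≤ Real.log (C * P m * P n) :=
      Real.log_le_log (hP _) (hsub m n)
    rw [Real.log_mul (mul_pos hC0 (hP m)).ne' (hP n).ne',
      Real.log_mul hC0.ne' (hP m).ne'] at this
    simp only [hu]
    linarith
  obtain ⟨b, hb⟩ := hbddB
  have hbdd : BddBelow (Set.range fun n : ℕ => u n / n) := by
    refine ⟨min b 0, ?_⟩
    rintro x ⟨n, rfl⟩
    rcases Nat.eq_zero_or_pos n with rfl | hn
    · simp [min_le_right]
    · have hn' : (0:ℝ) < n := by exact_mod_cast hn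
      have h1 : b ≤ Real.log (P n) / n := hb ⟨n, rfl⟩
      have h2 : 0 ≤ Real.log C / n := by positivity
      show min b 0 ≤ u n / n
      have heq : u n / n = Real.log C / n + Real.log (P n) / n := by
        simp [hu, add_div]
      rw [heq]
      calc min b 0 ≤ b := min_le_left _ _
        _ ≤ Real.log C / n + Real.log (P n) / n := by linarith
  -- limsup of log P r / r equals h.lim
  have hlim : Filter.Tendsto (fun n : ℕ => Real.log (P n) / n) Filter.atTop
      (nhds hsubadd.lim) := by
    have h1 := hsubadd.tendsto_lim hbdd
    have h2 : Filter.Tendsto (fun n : ℕ => Real.log C / n) Filter.atTop (nhds 0) :=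
      Filter.Tendsto.div_atTop tendsto_const_nhds tendsto_natCast_atTop_atTop
    have := h1.sub h2
    simp only [hu] at this
    rw [sub_zero] at this
    refine this.congr' ?_
    filter_upwards [Filter.eventually_ne_atTop 0] with n hn
    field_simp
    ring
  have hδlim : δ = hsubadd.lim := by
    rw [hδ, hlim.limsup_eq]
  -- key bound: for n ≥ 1, P n * exp (-n δ) ≥ 1/C
  have key : ∀ n : ℕ, n ≠ 0 → C⁻¹ ≤ P n * Real.exp (-(n : ℝ) * δ) := by
    intro n hn
    have hn' : (0:ℝ) < n := by exact_mod_cast Nat.pos_of_ne_zero hn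
    have h1 : δ ≤ u n / n := hδlim ▸ hsubadd.lim_le_div hbdd hn
    have h2 : (n : ℝ) * δ ≤ Real.log C + Real.log (P n) := by
      have := mul_le_mul_of_nonneg_left h1 hn'.le
      rwa [mul_div_cancel₀ _ hn'.ne'] at this
    have h3 : Real.exp ((n:ℝ) * δ) ≤ C * P n := by
      calc Real.exp ((n:ℝ) * δ) ≤ Real.exp (Real.log C + Real.log (P n)) :=
            Real.exp_le_exp.2 h2
        _ = C * P n := by rw [Real.exp_add, Real.exp_log hC0, Real.exp_log (hP n)]
    rw [neg_mul, Real.exp_neg, ← div_eq_mul_inv, le_div_iff₀ (Real.exp_pos _),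
      inv_mul_eq_div, div_le_iff₀ hC0]
    linarith
  intro hsum
  have h0 := hsum.tendsto_atTop_zero
  have : ∀ᶠ n in Filter.atTop, C⁻¹ ≤ P n * Real.exp (-(n : ℝ) * δ) := by
    filter_upwards [Filter.eventually_ne_atTop 0] with n hn using key n hn
  have hle : C⁻¹ ≤ 0 := ge_of_tendsto h0 this
  exact absurd hle (not_le.2 (by positivity))
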